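/- Let V₁ : Matrix (Fin a) (Fin m) ℝ and K : Matrix (Fin c) (Fin m) ℝ, and for a weight vector u : Fin m → ℝ define φ_a(u) = V₁ * Matrix.diagonal u * Kᵀ * K * Matrix.diagonal u * V₁ᵀ. Then φ_a is psd-convex: for all u₁, u₂ : Fin m → ℝ and λ ∈ [0,1], the matrix λ • φ_a(u₁) + (1-λ) • φ_a(u₂) - φ_a(λ • u₁ + (1-λ) • u₂) is positive semidefinite. -/

import Mathlib

open Matrix

lemma phi_as_gram {a c m : ℕ} (V₁ : Matrix (Fin a) (Fin m) ℝ)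
    (K : Matrix (Fin c) (Fin m) ℝ) (u : Fin m → ℝ) :
    V₁ * Matrix.diagonal u * Kᵀ * K * Matrix.diagonal u * V₁ᵀ
      = (K * Matrix.diagonal u * V₁ᵀ)ᵀ * (K * Matrix.diagonal u * V₁ᵀ) := by
  simp [Matrix.transpose_mul, Matrix.diagonal_transpose, Matrix.mul_assoc]

/-- Lemma 4 of the paper: the mapping
`φ_a(u) = V₁ (diag u) Kᵀ K (diag u) V₁ᵀ` appearing as the nonlinear block `Ā_rᵀ Ā_r` of the
BMI constraint is psd-convex in the weight vector `u`. -/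
theorem phi_a_psd_convex
    (a c m : ℕ) (V₁ : Matrix (Fin a) (Fin m) ℝ) (K : Matrix (Fin c) (Fin m) ℝ)
    (φa : (Fin m → ℝ) → Matrix (Fin a) (Fin a) ℝ)
    (hφa : ∀ u, φa u =
      V₁ * Matrix.diagonal u * Kᵀ * K * Matrix.diagonal u * V₁ᵀ) :
    ∀ (u₁ u₂ : Fin m → ℝ) (l : ℝ), 0 ≤ l → l ≤ 1 →
      (l • φa u₁ + (1 - l) • φa u₂ - φa (l • u₁ + (1 - l) • u₂)).PosSemidef := by
  intro u₁ u₂ l hl0 hl1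
  set A := K * Matrix.diagonal u₁ * V₁ᵀ with hA
  set B := K * Matrix.diagonal u₂ * V₁ᵀ with hB
  have hlin : K * Matrix.diagonal (l • u₁ + (1 - l) • u₂) * V₁ᵀ
      = l • A + (1 - l) • B := by
    have hd : Matrix.diagonal (l • u₁ + (1 - l) • u₂)
        = l • Matrix.diagonal u₁ + (1 - l) • Matrix.diagonal u₂ := by
      ext i j
      by_cases h : i = j <;> simp [Matrix.diagonal, h]
    rw [hd]
    simp [hA, hB, Matrix.mul_add, Matrix.add_mul, Matrix.mul_smul, Matrix.smul_mul]
  have hkey : l • φa u₁ + (1 - l) • φa u₂ - φa (l • u₁ + (1 - l) • u₂)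
      = (l * (1 - l)) • ((A - B)ᵀ * (A - B)) := by
    rw [hφa, hφa, hφa, phi_as_gram, phi_as_gram, phi_as_gram, hlin]
    simp only [Matrix.transpose_add, Matrix.transpose_smul, Matrix.transpose_sub,
      Matrix.mul_add, Matrix.add_mul, Matrix.mul_sub, Matrix.sub_mul,
      Matrix.smul_mul, Matrix.mul_smul, smul_smul, smul_sub, smul_add]
    module
  rw [hkey]
  have hnn : 0 ≤ l * (1 - l) := mul_nonneg hl0 (by linarith)
  have hpsd : ((A - B)ᵀ * (A - B)).PosSemidef := by
    have := Matrix.posSemidef_conjTranspose_mul_self (A - B)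
    simpa using this
  refine ⟨?_, fun x => ?_⟩
  · show _ᴴ = _
    rw [Matrix.conjTranspose_smul, hpsd.1]
    simp
  exact (hpsd.smul hnn).2 x
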